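/- arXiv:2401.00485 — 2 statements merged into one kernel-verified Lean document; each statement's English description precedes it below -/
import Mathlib

section
/- Let A and B be complex unital Banach algebras with A semisimple, and let T : A → B be a surjective map which is spectrally additive, i.e. σ(x + y) = σ(Tx + Ty) for all x, y ∈ A. Then: (a) σ(Tx) = σ(x) for each x ∈ A, and T maps the group of invertible elements of A onto the group of invertible elements of B; (b) T is injective; (c) T(λ·1 + x) = λ·1 + Tx for every λ ∈ ℂ and x ∈ A, and in particular T(0) = 0 and T(1) = 1. -/
open Metric Set Complex Pointwise

section Core

set_option linter.unusedSectionVars false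

variable {R : Type*} [NormedRing R] [NormedAlgebra ℂ R] [CompleteSpace R]

private lemma isUnit_smul_ne_zero {l : ℂ} (hl : l ≠ 0) {w : R} (hw : IsUnit w) :
    IsUnit (l • w) := by
  have := IsUnit.smul (Units.mk0 l hl) hw
  simpa [Units.smul_def] using this

/-- Analytic core: if `1 + w * a` is a unit for every invertible `w`, then `1 + y * a`
is a unit for every `y`. (Hartogs-style two-variable analytic continuation argument.) -/
lemma core_isUnit (a y : R) (hu : ∀ w : R, IsUnit w → IsUnit (1 + w * a)) :
    IsUnit (1 + y * a) := by
  set Rad : ℝ := ‖y‖ * ‖(1 : R)‖ + 1 with hRadDef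
  have hRad0 : 0 < Rad := by positivity
  set g : ℂ → ℂ → R := fun l z => 1 + l • (y * a) - (l * z) • a with hgdef
  have gform : ∀ l z, g l z = 1 + (l • (y - z • (1 : R))) * a := by
    intro l z
    simp only [hgdef, smul_mul_assoc, sub_mul, one_mul, smul_sub, smul_smul, add_sub_assoc]
  have K1 : ∀ (l z : ℂ), Rad ≤ ‖z‖ → IsUnit (g l z) := by
    intro l z hz
    rcases eq_or_ne l 0 with rfl | hl
    · simp [hgdef]
    · have hz' : z ∉ spectrum ℂ y := by
        intro hmem
        have h1 := spectrum.norm_le_norm_mul_of_mem hmem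
        have : Rad ≤ ‖y‖ * ‖(1 : R)‖ := le_trans hz h1
        rw [hRadDef] at this; linarith
      have hyz : IsUnit (y - z • (1 : R)) := by
        have h2 := spectrum.notMem_iff.mp hz'
        rw [Algebra.algebraMap_eq_smul_one] at h2
        simpa [neg_sub] using h2.neg
      rw [gform]
      exact hu _ (isUnit_smul_ne_zero hl hyz)
  set S : ℝ := ‖y * a‖ + Rad * ‖a‖ with hSdef
  have hS0 : 0 ≤ S := by positivity
  set δ : ℝ := (S + 1)⁻¹ with hδdef
  have hδ0 : 0 < δ := by positivity
  have K2 : ∀ (l z : ℂ), ‖l‖ < δ → ‖z‖ ≤ Rad → IsUnit (g l z) := by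
    intro l z hl hz
    have e : g l z = 1 - ((l * z) • a - l • (y * a)) := by rw [hgdef]; abel_nf
    rw [e]
    apply isUnit_one_sub_of_norm_lt_one
    have h1 : ‖(l * z) • a - l • (y * a)‖ ≤ ‖l‖ * ‖z‖ * ‖a‖ + ‖l‖ * ‖y * a‖ := by
      have h0 := norm_sub_le ((l * z) • a) (l • (y * a))
      rw [norm_smul, norm_smul, norm_mul] at h0
      nlinarith [h0]
    have h2 : ‖l‖ * ‖z‖ * ‖a‖ + ‖l‖ * ‖y * a‖ ≤ ‖l‖ * (S + 1) := by
      have := norm_nonneg a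
      have := norm_nonneg l
      have := norm_nonneg (y * a)
      rw [hSdef]
      nlinarith [mul_le_mul_of_nonneg_left hz (mul_nonneg (norm_nonneg l) (norm_nonneg a))]
    have h3 : ‖l‖ * (S + 1) < 1 := by
      rw [hδdef] at hl
      calc ‖l‖ * (S + 1) < (S + 1)⁻¹ * (S + 1) := by
            apply mul_lt_mul_of_pos_right hl; linarith
        _ = 1 := by field_simp
    linarith
  -- derivatives of g
  have gdl : ∀ (z l : ℂ), HasDerivAt (fun l' => g l' z) (y * a - z • a) l := by
    intro z l
    have h1 : HasDerivAt (fun l' : ℂ => l' • (y * a)) (y * a) l := by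
      simpa using (hasDerivAt_id l).smul_const (y * a)
    have h2 : HasDerivAt (fun l' : ℂ => (l' * z) • a) (z • a) l := by
      simpa using ((hasDerivAt_id l).mul_const z).smul_const a
    exact (h1.const_add (1 : R)).sub h2
  have gdz : ∀ (l z : ℂ), HasDerivAt (fun z' => g l z') (-(l • a)) z := by
    intro l z
    have h2 : HasDerivAt (fun z' : ℂ => (l * z') • a) (l • a) z := by
      simpa using ((hasDerivAt_id z).const_mul l).smul_const a
    have h3 := (hasDerivAt_const z ((1 : R) + l • (y * a))).sub h2
    simp only [zero_sub] at h3
    exact h3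
  set q : ℂ → ℂ → R := fun l z => Ring.inverse (g l z) with hqdef
  have qdl : ∀ {l z : ℂ}, IsUnit (g l z) →
      HasDerivAt (fun l' => q l' z) (-(q l z * (y * a - z • a) * q l z)) l := by
    intro l z h
    obtain ⟨u, hu⟩ := h
    have h1 := hasFDerivAt_ringInverse (𝕜 := ℂ) (R := R) u
    rw [hu] at h1
    have h2 := h1.comp_hasDerivAt l (gdl z l)
    have e1 : q l z = ↑u⁻¹ := by rw [hqdef]; simp only [← hu, Ring.inverse_unit]
    have e2 : -(q l z * (y * a - z • a) * q l z)
        = (-((ContinuousLinearMap.mulLeftRight ℂ R) ↑u⁻¹) ↑u⁻¹) (y * a - z • a) := by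
      simp [e1, ContinuousLinearMap.mulLeftRight_apply]
    rw [e2]
    exact h2
  have qdz : ∀ {l z : ℂ}, IsUnit (g l z) → DifferentiableAt ℂ (fun z' => q l z') z := by
    intro l z h
    exact (differentiableAt_inverse h).comp z (gdz l z).differentiableAt
  have hgc : Continuous (fun p : ℂ × ℂ => g p.1 p.2) := by
    simp only [hgdef]
    exact (continuous_const.add (continuous_fst.smul continuous_const)).sub
      ((continuous_fst.mul continuous_snd).smul continuous_const)
  have qcont : ∀ {l z : ℂ}, IsUnit (g l z) →
      ContinuousAt (fun p : ℂ × ℂ => q p.1 p.2) (l, z) := by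
    intro l z h
    obtain ⟨u, hu⟩ := h
    have h1 : ContinuousAt Ring.inverse (g l z) := hu ▸ NormedRing.inverse_continuousAt u
    have h2 : ContinuousAt (fun p : ℂ × ℂ => g p.1 p.2) (l, z) := hgc.continuousAt
    exact show ContinuousAt (Ring.inverse ∘ fun p : ℂ × ℂ => g p.1 p.2) (l, z) from
      ContinuousAt.comp (f := fun p : ℂ × ℂ => g p.1 p.2) (x := (l, z)) h1 h2
  set Φ : ℂ → R := fun l =>
    (2 * Real.pi * Complex.I : ℂ)⁻¹ • ∮ z in C(0, Rad), (z - 0)⁻¹ • q l z with hΦdef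
  have C2 : ∀ l : ℂ, ‖l‖ < δ → Φ l = q l 0 := by
    intro l hl
    have hcont : ContinuousOn (fun z => q l z) (closedBall (0 : ℂ) Rad) := by
      intro z hz
      have h := K2 l z hl (by simpa [mem_closedBall_zero_iff] using hz)
      have h2 : ContinuousAt (fun z' : ℂ => ((l, z') : ℂ × ℂ)) z :=
        (continuous_const.prodMk continuous_id).continuousAt
      exact (show ContinuousAt ((fun p : ℂ × ℂ => q p.1 p.2) ∘ fun z' : ℂ =>
          ((l, z') : ℂ × ℂ)) z from
        ContinuousAt.comp (f := fun z' : ℂ => ((l, z') : ℂ × ℂ)) (x := z) (qcont h) h2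
        ).continuousWithinAt
    have hdiff : ∀ x ∈ ball (0 : ℂ) Rad \ (∅ : Set ℂ), DifferentiableAt ℂ (fun z => q l z) x := by
      intro x hx
      exact qdz (K2 l x hl (le_of_lt (by simpa [mem_ball_zero_iff] using hx.1)))
    exact Complex.two_pi_I_inv_smul_circleIntegral_sub_inv_smul_of_differentiable_on_off_countable
      countable_empty (by simpa using hRad0) hcont hdiff
  -- integrand over the circle
  set F : ℂ → ℝ → R := fun l θ => (circleMap 0 Rad θ * Complex.I) •
      ((circleMap 0 Rad θ)⁻¹ • q l (circleMap 0 Rad θ)) with hFdef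
  set F' : ℂ → ℝ → R := fun l θ => (circleMap 0 Rad θ * Complex.I) •
      ((circleMap 0 Rad θ)⁻¹ •
        (-(q l (circleMap 0 Rad θ) * (y * a - (circleMap 0 Rad θ) • a) *
            q l (circleMap 0 Rad θ)))) with hF'def
  have hζnorm : ∀ θ : ℝ, ‖circleMap 0 Rad θ‖ = Rad := by
    intro θ
    rw [norm_circleMap_zero, abs_of_pos hRad0]
  have hKθ : ∀ (l : ℂ) (θ : ℝ), IsUnit (g l (circleMap 0 Rad θ)) :=
    fun l θ => K1 _ _ (le_of_eq (hζnorm θ).symm)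
  have hζne : ∀ θ : ℝ, circleMap 0 Rad θ ≠ 0 := fun θ => by
    intro h
    have := hζnorm θ
    rw [h] at this
    simp only [norm_zero] at this
    linarith
  have contq : ∀ l : ℂ, Continuous (fun θ : ℝ => q l (circleMap 0 Rad θ)) := by
    intro l
    rw [continuous_iff_continuousAt]
    intro θ
    have h2 : ContinuousAt (fun θ' : ℝ => ((l, circleMap 0 Rad θ') : ℂ × ℂ)) θ :=
      (continuous_const.prodMk (continuous_circleMap 0 Rad)).continuousAt
    exact show ContinuousAt ((fun p : ℂ × ℂ => q p.1 p.2) ∘ fun θ' : ℝ =>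
        ((l, circleMap 0 Rad θ') : ℂ × ℂ)) θ from
      ContinuousAt.comp (f := fun θ' : ℝ => ((l, circleMap 0 Rad θ') : ℂ × ℂ)) (x := θ)
        (qcont (hKθ l θ)) h2
  have contF : ∀ l : ℂ, Continuous (F l) := by
    intro l
    exact ((continuous_circleMap 0 Rad).mul continuous_const).smul
      (((continuous_circleMap 0 Rad).inv₀ hζne).smul (contq l))
  have contF' : ∀ l : ℂ, Continuous (F' l) := by
    intro l
    refine ((continuous_circleMap 0 Rad).mul continuous_const).smul
      ((((continuous_circleMap 0 Rad).inv₀ hζne)).smul (Continuous.neg ?_))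
    exact ((contq l).mul (continuous_const.sub
      ((continuous_circleMap 0 Rad).smul continuous_const))).mul (contq l)
  have circle_eq : ∀ l : ℂ, (∮ z in C(0, Rad), (z - 0)⁻¹ • q l z)
      = ∫ θ in (0:ℝ)..(2 * Real.pi), F l θ := by
    intro l
    simp only [circleIntegral, deriv_circleMap, hFdef, sub_zero]
  have main : ∀ l₀ : ℂ, DifferentiableAt ℂ
      (fun l => ∫ θ in (0:ℝ)..(2 * Real.pi), F l θ) l₀ := by
    intro l₀
    obtain ⟨C0, hC0⟩ := (((isCompact_closedBall l₀ 1).prod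
        (isCompact_sphere (0 : ℂ) Rad))).exists_bound_of_continuousOn
      (by
        intro p hp
        have hp2 : ‖p.2‖ = Rad := by
          have := hp.2
          simpa [mem_sphere_iff_norm, sub_zero] using this
        exact (qcont (K1 p.1 p.2 hp2.ge)).continuousWithinAt)
    set C : ℝ := max C0 0 with hCdef
    have hCnn : 0 ≤ C := le_max_right _ _
    have hQC : ∀ (l : ℂ), l ∈ ball l₀ 1 → ∀ θ : ℝ, ‖q l (circleMap 0 Rad θ)‖ ≤ C := by
      intro l hl θ
      refine le_trans (hC0 (l, circleMap 0 Rad θ) ?_) (le_max_left _ _)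
      refine ⟨ball_subset_closedBall hl, ?_⟩
      simp only [mem_sphere_iff_norm, sub_zero]
      exact hζnorm θ
    have key := intervalIntegral.hasDerivAt_integral_of_dominated_loc_of_deriv_le
      (F := F) (F' := F') (x₀ := l₀) (a := (0:ℝ)) (b := 2 * Real.pi) (μ := MeasureTheory.volume)
      (bound := fun _ => C * S * C) (s := ball l₀ 1) (ball_mem_nhds l₀ one_pos)
      (Filter.Eventually.of_forall fun l => (contF l).aestronglyMeasurable)
      ((contF l₀).intervalIntegrable _ _)
      (contF' l₀).aestronglyMeasurable
      ?_ intervalIntegrable_const ?_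
    · exact key.2.differentiableAt
    · -- bound
      refine Filter.Eventually.of_forall fun θ => fun _ => fun l hl => ?_
      have hQ := hQC l hl θ
      set ζ := circleMap 0 Rad θ with hζ
      set Q := q l ζ with hQdef
      have hw : ‖y * a - ζ • a‖ ≤ S := by
        refine (norm_sub_le _ _).trans ?_
        rw [norm_smul, hζnorm θ, hSdef]
      have hinner : ‖Q * (y * a - ζ • a) * Q‖ ≤ C * S * C := by
        calc ‖Q * (y * a - ζ • a) * Q‖ ≤ ‖Q * (y * a - ζ • a)‖ * ‖Q‖ := norm_mul_le _ _
          _ ≤ (‖Q‖ * ‖y * a - ζ • a‖) * ‖Q‖ :=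
              mul_le_mul_of_nonneg_right (norm_mul_le _ _) (norm_nonneg _)
          _ ≤ (C * S) * C := by
              refine mul_le_mul (mul_le_mul hQ hw (norm_nonneg _) hCnn) hQ (norm_nonneg _) ?_
              exact mul_nonneg hCnn hS0
      have hζn : ‖ζ‖ = Rad := by rw [hζ]; exact hζnorm θ
      show ‖(ζ * Complex.I) • (ζ⁻¹ • -(Q * (y * a - ζ • a) * Q))‖ ≤ C * S * C
      rw [norm_smul, norm_smul, norm_neg, norm_mul, norm_inv, hζn, Complex.norm_I]
      have heq : Rad * 1 * (Rad⁻¹ * ‖Q * (y * a - ζ • a) * Q‖)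
          = ‖Q * (y * a - ζ • a) * Q‖ := by
        field_simp
      rw [heq]
      exact hinner
    · -- differentiability
      refine Filter.Eventually.of_forall fun θ => fun _ => fun l hl => ?_
      exact ((qdl (hKθ l θ)).const_smul ((circleMap 0 Rad θ)⁻¹)).const_smul
        (circleMap 0 Rad θ * Complex.I)
  have C1 : Differentiable ℂ Φ := by
    have hΦeq : Φ = fun l => (2 * Real.pi * Complex.I : ℂ)⁻¹ •
        ∫ θ in (0:ℝ)..(2 * Real.pi), F l θ := by
      funext l
      show (2 * Real.pi * Complex.I : ℂ)⁻¹ • (∮ z in C(0, Rad), (z - 0)⁻¹ • q l z) = _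
      rw [circle_eq l]
    rw [hΦeq]
    exact fun l₀ => ((main l₀)).fun_const_smul _
  -- identity theorem
  have hg0diff : Differentiable ℂ (fun l => g l 0) := fun l => (gdl 0 l).differentiableAt
  have hunit0 : ∀ l : ℂ, ‖l‖ < δ → IsUnit (g l 0) :=
    fun l hl => K2 l 0 hl (by simpa using hRad0.le)
  have E1 : (fun l => g l 0 * Φ l) = fun _ => (1 : R) := by
    apply AnalyticOnNhd.eq_of_eventuallyEq
      ((hg0diff.mul C1).differentiableOn.analyticOnNhd isOpen_univ)
      (analyticOnNhd_const) (z₀ := (0:ℂ))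
    filter_upwards [Metric.ball_mem_nhds (0 : ℂ) hδ0] with l hl
    rw [Pi.mul_apply, C2 l (by simpa [mem_ball_zero_iff] using hl)]
    exact Ring.mul_inverse_cancel _ (hunit0 l (by simpa [mem_ball_zero_iff] using hl))
  have E2 : (fun l => Φ l * g l 0) = fun _ => (1 : R) := by
    apply AnalyticOnNhd.eq_of_eventuallyEq
      ((C1.mul hg0diff).differentiableOn.analyticOnNhd isOpen_univ)
      (analyticOnNhd_const) (z₀ := (0:ℂ))
    filter_upwards [Metric.ball_mem_nhds (0 : ℂ) hδ0] with l hl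
    rw [Pi.mul_apply, C2 l (by simpa [mem_ball_zero_iff] using hl)]
    exact Ring.inverse_mul_cancel _ (hunit0 l (by simpa [mem_ball_zero_iff] using hl))
  have hu10 : IsUnit (g 1 0) := ⟨⟨g 1 0, Φ 1, congrFun E1 1, congrFun E2 1⟩, rfl⟩
  have hfin : g 1 0 = 1 + y * a := by simp [hgdef]
  rwa [hfin] at hu10

/-- If `a + v` is invertible for every invertible `v`, then `a` lies in the Jacobson radical. -/
lemma mem_jacobson_of_isUnit_add (a : R)
    (h : ∀ v : R, IsUnit v → IsUnit (a + v)) :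
    a ∈ Ideal.jacobson (⊥ : Ideal R) := by
  have hq : ∀ w : R, IsUnit w → IsUnit (1 + w * a) := by
    intro w hw
    obtain ⟨u, rfl⟩ := hw
    have h1 : IsUnit (a + (↑u⁻¹ : R)) := h _ (Units.isUnit u⁻¹)
    have h2 := (u.isUnit).mul h1
    have e : (u : R) * (a + ↑u⁻¹) = ↑u * a + 1 := by
      rw [mul_add, Units.mul_inv]
    rw [e, add_comm] at h2
    exact h2
  have hy : ∀ y : R, IsUnit (1 + y * a) := fun y => core_isUnit a y hq
  rw [Ideal.mem_jacobson_iff]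
  intro y
  obtain ⟨u, hu⟩ := hy y
  refine ⟨↑u⁻¹, ?_⟩
  rw [Submodule.mem_bot, sub_eq_zero]
  calc (↑u⁻¹ : R) * y * a + ↑u⁻¹ = ↑u⁻¹ * (1 + y * a) := by
        rw [mul_add, mul_one, mul_assoc, add_comm]
    _ = 1 := by rw [← hu, Units.inv_mul]

/-- In a semisimple Banach algebra, two elements whose translates all have equal spectra
are equal. -/
lemma eq_of_spectrum_add_eq (hA : Ideal.jacobson (⊥ : Ideal R) = ⊥) (p q : R)
    (h : ∀ z : R, spectrum ℂ (p + z) = spectrum ℂ (q + z)) : p = q := by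
  have key : ∀ v : R, IsUnit v → IsUnit ((p - q) + v) := by
    intro v hv
    have h1 := h (v - q)
    have e1 : p + (v - q) = (p - q) + v := by abel
    have e2 : q + (v - q) = v := by abel
    rw [e1, e2] at h1
    rw [← spectrum.zero_notMem_iff ℂ] at hv ⊢
    rw [h1]
    exact hv
  have hmem := mem_jacobson_of_isUnit_add _ key
  rw [hA, Ideal.mem_bot] at hmem
  exact sub_eq_zero.mp hmem

end Core

/-- Basic properties of a surjective spectrally additive map from a semisimple complex
unital Banach algebra: it preserves spectra, maps invertibles onto invertibles, is
injective, and satisfies `T(λ·1 + x) = λ·1 + Tx`; in particular `T 0 = 0` and `T 1 = 1`. -/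
theorem spectrally_additive_basic_properties
    {A B : Type*} [NormedRing A] [NormedAlgebra ℂ A] [CompleteSpace A]
    [NormedRing B] [NormedAlgebra ℂ B] [CompleteSpace B]
    (hA : Ideal.jacobson (⊥ : Ideal A) = ⊥)
    (T : A → B)
    (hsurj : Function.Surjective T)
    (hsa : ∀ x y : A, spectrum ℂ (x + y) = spectrum ℂ (T x + T y)) :
    (∀ x : A, spectrum ℂ (T x) = spectrum ℂ x) ∧
      (T '' {x : A | IsUnit x} = {y : B | IsUnit y}) ∧
      Function.Injective T ∧
      (∀ (lam : ℂ) (x : A), T (lam • (1 : A) + x) = lam • (1 : B) + T x) ∧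
      T 0 = 0 ∧ T 1 = 1 := by
  have specEq : ∀ x : A, spectrum ℂ (T x) = spectrum ℂ x := by
    intro x
    have h := hsa x x
    set u : ℂˣ := Units.mk0 (2 : ℂ) two_ne_zero with hudef
    have e1 : x + x = u • x := by
      simp [hudef, Units.smul_def, two_smul]
    have e2 : T x + T x = u • T x := by
      simp [hudef, Units.smul_def, two_smul]
    rw [e1, e2, spectrum.unit_smul_eq_smul, spectrum.unit_smul_eq_smul] at h
    have h2 := congrArg (fun s : Set ℂ => u⁻¹ • s) h
    simpa [inv_smul_smul] using h2.symm
  have diffLemma : ∀ p q : A, (∀ z : A, spectrum ℂ (p + z) = spectrum ℂ (q + z)) → p = q :=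
    fun p q h => eq_of_spectrum_add_eq hA p q h
  have hinj : Function.Injective T := by
    intro x y hxy
    apply diffLemma
    intro z
    rw [hsa x z, hsa y z, hxy]
  have hshift : ∀ (lam : ℂ) (x : A), T (lam • (1 : A) + x) = lam • (1 : B) + T x := by
    intro lam x
    obtain ⟨w, hw⟩ := hsurj (lam • (1 : B) + T x)
    have hweq : w = lam • (1 : A) + x := by
      apply diffLemma
      intro z
      have h1 := hsa w z
      rw [hw] at h1
      have e1 : lam • (1 : B) + T x + T z = algebraMap ℂ B lam + (T x + T z) := by
        rw [Algebra.algebraMap_eq_smul_one]; exact add_assoc _ _ _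
      have e2 : lam • (1 : A) + x + z = algebraMap ℂ A lam + (x + z) := by
        rw [Algebra.algebraMap_eq_smul_one]; exact add_assoc _ _ _
      rw [h1, e1, ← spectrum.singleton_add_eq, ← hsa x z, spectrum.singleton_add_eq, ← e2]
    rw [← hw, hweq]
  have hT0 : T 0 = 0 := by
    obtain ⟨w, hw⟩ := hsurj 0
    have hweq : w = 0 := by
      apply diffLemma
      intro z
      rw [hsa w z, hw, zero_add, zero_add, specEq z]
    rw [← hweq, hw]
  have hT1 : T 1 = 1 := by
    have h := hshift 1 0
    simpa [hT0] using h
  have himg : T '' {x : A | IsUnit x} = {y : B | IsUnit y} := by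
    ext b
    constructor
    · rintro ⟨x, hx, rfl⟩
      simp only [Set.mem_setOf_eq] at hx ⊢
      rw [← spectrum.zero_notMem_iff ℂ] at hx ⊢
      rwa [specEq]
    · intro hb
      obtain ⟨x, rfl⟩ := hsurj b
      simp only [Set.mem_setOf_eq] at hb
      refine ⟨x, ?_, rfl⟩
      simp only [Set.mem_setOf_eq]
      rw [← spectrum.zero_notMem_iff ℂ] at hb ⊢
      rwa [specEq] at hb
  exact ⟨specEq, himg, hinj, hshift, hT0, hT1⟩
end

section
/- Let A be a unital C*-algebra, let B be a complex unital Banach algebra, and let S : A → B be a complex-linear map such that σ(Sa) = σ(a) for every self-adjoint element a ∈ A. Then S is injective. -/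
open Complex ComplexStarModule Pointwise

lemma aux_selfAdjoint_eq_zero {A : Type*} [CStarAlgebra A] {x : A}
    (hx : IsSelfAdjoint x) (h : spectrum ℂ x = {0}) : x = 0 := by
  have h1 := hx.spectralRadius_eq_nnnorm
  rw [spectralRadius, h] at h1
  simp only [Set.mem_singleton_iff, iSup_iSup_eq_left, nnnorm_zero, ENNReal.coe_zero] at h1
  rw [← nnnorm_eq_zero]
  exact_mod_cast h1.symm

/-- A complex-linear map from a unital C*-algebra into a complex unital Banach algebra
which preserves the spectrum of every self-adjoint element is injective. -/
theorem injective_of_linear_spectrum_preserving_on_selfAdjoints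
    {A : Type*} [NormedRing A] [StarRing A] [CStarRing A] [NormedAlgebra ℂ A]
    [CompleteSpace A] [StarModule ℂ A]
    {B : Type*} [NormedRing B] [NormedAlgebra ℂ B] [CompleteSpace B]
    (S : A →ₗ[ℂ] B)
    (hspec : ∀ a : A, IsSelfAdjoint a → spectrum ℂ (S a) = spectrum ℂ a) :
    Function.Injective S := by
  letI : CStarAlgebra A := ⟨⟩
  rcases subsingleton_or_nontrivial A with hA | hA
  · exact fun a b _ => Subsingleton.elim a b
  rw [injective_iff_map_eq_zero]
  intro a ha
  have hx : IsSelfAdjoint ((ℜ a : A)) := (ℜ a).2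
  have hy : IsSelfAdjoint ((ℑ a : A)) := (ℑ a).2
  have hdecomp : (ℜ a : A) + I • (ℑ a : A) = a := realPart_add_I_smul_imaginaryPart a
  have hS : S (ℜ a : A) + I • S (ℑ a : A) = 0 := by
    rw [← map_smul, ← map_add, hdecomp, ha]
  have hSx : S (ℜ a : A) = (-I) • S (ℑ a : A) := by
    rw [neg_smul]
    exact eq_neg_of_add_eq_zero_left hS
  -- spectrum equation
  have hsmul : spectrum ℂ ((ℜ a : A)) = (Units.mk0 (-I) (by simp [I_ne_zero]) : ℂˣ) •
      spectrum ℂ ((ℑ a : A)) := by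
    have h := spectrum.unit_smul_eq_smul (S (ℑ a : A)) (Units.mk0 (-I) (by simp [I_ne_zero]))
    rw [← hspec _ hx, ← hspec _ hy, hSx]
    simpa [Units.smul_def] using h
  -- elements of spectrum of ℜ a are zero
  have hxz : spectrum ℂ ((ℜ a : A)) = {0} := by
    apply Set.eq_singleton_iff_nonempty_unique_mem.mpr
    refine ⟨spectrum.nonempty _, fun z hz => ?_⟩
    have hzre := hx.mem_spectrum_eq_re hz
    rw [hsmul] at hz
    obtain ⟨w, hw, hwz⟩ := hz
    have hwre := hy.mem_spectrum_eq_re hw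
    have him : z.im = 0 := by rw [hzre]; simp
    have hwim : w.im = 0 := by rw [hwre]; simp
    have hre : z.re = 0 := by
      have : z = -I * w := by simpa [Units.smul_def] using hwz.symm
      rw [this]
      simp [Complex.neg_re, Complex.mul_re, hwim]
    exact Complex.ext hre him
  have hyz : spectrum ℂ ((ℑ a : A)) = {0} := by
    apply Set.eq_singleton_iff_nonempty_unique_mem.mpr
    refine ⟨spectrum.nonempty _, fun w hw => ?_⟩
    have hwre := hy.mem_spectrum_eq_re hw
    have : -I * w ∈ spectrum ℂ ((ℜ a : A)) := by
      rw [hsmul]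
      exact ⟨w, hw, by simp [Units.smul_def]⟩
    rw [hxz, Set.mem_singleton_iff] at this
    simpa [neg_mul, neg_eq_zero, mul_eq_zero, I_ne_zero] using this
  have hx0 : (ℜ a : A) = 0 := aux_selfAdjoint_eq_zero hx hxz
  have hy0 : (ℑ a : A) = 0 := aux_selfAdjoint_eq_zero hy hyz
  rw [← hdecomp, hx0, hy0, smul_zero, add_zero]
end
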